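/- Let R = ℂ⟦X,Y⟧ be the formal power series ring in two variables over ℂ (MvPowerSeries (Fin 2) ℂ). Suppose P, P₁, P₂, f, g ∈ R and c₁, c₂ ∈ ℂ satisfy P = c₁·X·P₁ + c₂·Y·P₂. Then the ideals generated by {P₁ + f·P, P₂ + g·P} and by {P₁, P₂} coincide: Ideal.span {P₁ + f·P, P₂ + g·P} = Ideal.span {P₁, P₂}. -/

import Mathlib

open MvPowerSeries

/-- The key algebraic step in the proof of Theorem 3.12: if
`P = c₁·X·P₁ + c₂·Y·P₂` in `ℂ⟦X,Y⟧`, then adding multiples of `P` to the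
generators `P₁, P₂` does not change the ideal they generate. -/
theorem stmt3 (P P₁ P₂ f g : MvPowerSeries (Fin 2) ℂ) (c₁ c₂ : ℂ)
    (hP : P = (C (σ := Fin 2) (R := ℂ) c₁) * X 0 * P₁ + (C (σ := Fin 2) (R := ℂ) c₂) * X 1 * P₂) :
    Ideal.span {P₁ + f * P, P₂ + g * P} = Ideal.span {P₁, P₂} := by
  set A := P₁ + f * P with hA
  set B := P₂ + g * P with hB
  set u : MvPowerSeries (Fin 2) ℂ :=
    1 + (C (σ := Fin 2) (R := ℂ) c₁) * X 0 * f + (C (σ := Fin 2) (R := ℂ) c₂) * X 1 * g with hu_def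
  have hu : IsUnit u := by
    rw [MvPowerSeries.isUnit_iff_constantCoeff]
    simp [hu_def]
  
  have h1 : P₁ ∈ Ideal.span {P₁, P₂} := Ideal.subset_span (Set.mem_insert _ _)
  have h2 : P₂ ∈ Ideal.span {P₁, P₂} :=
    Ideal.subset_span (Set.mem_insert_of_mem _ rfl)
  have hPmem : P ∈ Ideal.span {P₁, P₂} := by
    rw [hP]
    exact add_mem (Ideal.mul_mem_left _ _ h1) (Ideal.mul_mem_left _ _ h2)
  have hAmem : A ∈ Ideal.span {A, B} := Ideal.subset_span (Set.mem_insert _ _)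
  have hBmem : B ∈ Ideal.span {A, B} :=
    Ideal.subset_span (Set.mem_insert_of_mem _ rfl)
  apply le_antisymm
  · rw [Ideal.span_le]
    rintro x (rfl | rfl)
    · exact add_mem h1 (Ideal.mul_mem_left _ _ hPmem)
    · exact add_mem h2 (Ideal.mul_mem_left _ _ hPmem)
  · rw [Ideal.span_le]
    have hP1 : P₁ ∈ Ideal.span {A, B} := by
      rw [← Ideal.unit_mul_mem_iff_mem _ hu]
      have heq : u * P₁ = (1 + (C (σ := Fin 2) (R := ℂ) c₂) * X 1 * g) * A
          - ((C (σ := Fin 2) (R := ℂ) c₂) * X 1 * f) * B := by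
        rw [hA, hB, hP, hu_def]; ring
      rw [heq]
      exact sub_mem (Ideal.mul_mem_left _ _ hAmem) (Ideal.mul_mem_left _ _ hBmem)
    have hP2 : P₂ ∈ Ideal.span {A, B} := by
      rw [← Ideal.unit_mul_mem_iff_mem _ hu]
      have heq : u * P₂ = (1 + (C (σ := Fin 2) (R := ℂ) c₁) * X 0 * f) * B
          - ((C (σ := Fin 2) (R := ℂ) c₁) * X 0 * g) * A := by
        rw [hA, hB, hP, hu_def]; ring
      rw [heq]
      exact sub_mem (Ideal.mul_mem_left _ _ hBmem) (Ideal.mul_mem_left _ _ hAmem)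
    rintro x (rfl | rfl)
    · exact hP1
    · exact hP2
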